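/- Cofree coalgebras exist over a field: for every K-vector space V there exist a coassociative counital K-coalgebra Γ and a K-linear map π : Γ → V such that for every coassociative counital K-coalgebra C and every K-linear map f : C → V there is a unique coalgebra morphism g : C → Γ with π ∘ g = f. -/

import Mathlib

open TensorProduct LinearMap

namespace CofreeAux

variable {K : Type} [Field K]

theorem piRightHom_injective {M : Type*} [AddCommGroup M] [Module K M]
    {ι : Type*} (N : ι → Type*) [∀ i, AddCommGroup (N i)] [∀ i, Module K (N i)] :
    Function.Injective (TensorProduct.piRightHom K K M N) := by
  classical
  let b := Module.Free.chooseBasis K M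
  set κ := Module.Free.ChooseBasisIndex K M
  let e : M ⊗[K] (∀ i, N i) ≃ₗ[K] (κ →₀ (∀ i, N i)) :=
    (TensorProduct.congr b.repr (LinearEquiv.refl K _)).trans
      (TensorProduct.finsuppScalarLeft K _ κ)
  let q : ∀ i, M ⊗[K] (N i) ≃ₗ[K] (κ →₀ N i) := fun i =>
    (TensorProduct.congr b.repr (LinearEquiv.refl K _)).trans
      (TensorProduct.finsuppScalarLeft K _ κ)
  have key : ∀ (t : M ⊗[K] (∀ i, N i)) (i : ι) (k : κ),
      (q i) ((TensorProduct.piRightHom K K M N) t i) k = (e t) k i := by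
    intro t
    induction t with
    | zero => simp
    | tmul m n =>
      intro i k
      simp only [piRightHom_tmul, e, q, LinearEquiv.trans_apply, TensorProduct.congr_tmul,
        LinearEquiv.refl_apply, TensorProduct.finsuppScalarLeft_apply_tmul_apply]
      rfl
    | add x y hx hy =>
      intro i k
      simp only [map_add, Pi.add_apply, Finsupp.add_apply, hx, hy]
  intro t t' h
  rw [← sub_eq_zero]
  set s := t - t' with hs
  have hps : TensorProduct.piRightHom K K M N s = 0 := by
    simp [hs, map_sub, h]
  have he : e s = 0 := by
    ext k i
    have := key s i k
    rw [hps] at this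
    simpa using this.symm
  have := congrArg e.symm he
  simpa using this

/-- Joint injectivity transfers along `lTensor`. -/
theorem joint_lTensor {M X : Type*} [AddCommGroup M] [Module K M]
    [AddCommGroup X] [Module K X]
    {ι : Type*} {Y : ι → Type*} [∀ i, AddCommGroup (Y i)] [∀ i, Module K (Y i)]
    (ψ : ∀ i, X →ₗ[K] Y i) (hψ : ∀ x, (∀ i, ψ i x = 0) → x = 0)
    (t : M ⊗[K] X) (ht : ∀ i, lTensor M (ψ i) t = 0) : t = 0 := by
  have hΨ : Function.Injective (LinearMap.pi ψ) := by
    intro x y hxy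
    rw [← sub_eq_zero]
    apply hψ
    intro i
    have := congrFun (congrArg (fun z => (z : ∀ i, Y i)) hxy) i
    simp only [LinearMap.pi_apply] at this
    simp [map_sub, this]
  have h1 : Function.Injective (lTensor M (LinearMap.pi ψ)) :=
    Module.Flat.lTensor_preserves_injective_linearMap _ hΨ
  have h2 := piRightHom_injective (K := K) (M := M) Y
  have key : ∀ (s : M ⊗[K] X) (i : ι),
      (TensorProduct.piRightHom K K M Y) (lTensor M (LinearMap.pi ψ) s) i
        = lTensor M (ψ i) s := by
    intro s
    induction s with
    | zero => simp
    | tmul m x => intro i; simp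
    | add x y hx hy => intro i; simp [map_add, hx, hy]
  have : (TensorProduct.piRightHom K K M Y) (lTensor M (LinearMap.pi ψ) t) = 0 := by
    funext i
    simp [key t i, ht i]
  have : lTensor M (LinearMap.pi ψ) t = 0 := h2 (by simpa using this)
  exact h1 (by simpa using this)

/-- Joint injectivity transfers along `rTensor`. -/
theorem joint_rTensor {M X : Type*} [AddCommGroup M] [Module K M]
    [AddCommGroup X] [Module K X]
    {ι : Type*} {Y : ι → Type*} [∀ i, AddCommGroup (Y i)] [∀ i, Module K (Y i)]
    (ψ : ∀ i, X →ₗ[K] Y i) (hψ : ∀ x, (∀ i, ψ i x = 0) → x = 0)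
    (t : X ⊗[K] M) (ht : ∀ i, rTensor M (ψ i) t = 0) : t = 0 := by
  have key : ∀ (s : X ⊗[K] M) (i : ι),
      lTensor M (ψ i) (TensorProduct.comm K X M s)
        = TensorProduct.comm K (Y i) M (rTensor M (ψ i) s) := by
    intro s
    induction s with
    | zero => simp
    | tmul x m => intro i; simp
    | add x y hx hy => intro i; simp [map_add, hx, hy]
  have h0 : TensorProduct.comm K X M t = 0 := by
    apply joint_lTensor ψ hψ
    intro i
    rw [key t i, ht i, map_zero]
  have := congrArg (TensorProduct.comm K X M).symm h0
  simpa using this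

variable (K) in
/-- Multiplication `K ⊗ K → K`. -/
noncomputable def mul2 : K ⊗[K] K →ₗ[K] K := (TensorProduct.lid K K).toLinearMap

@[simp] lemma mul2_tmul (r s : K) : mul2 K (r ⊗ₜ[K] s) = r * s := by
  simp [mul2, smul_eq_mul]

lemma mul2_injective : Function.Injective (mul2 K) := (TensorProduct.lid K K).injective

variable (K) (B : Type v)

/-- Deconcatenation map. -/
noncomputable def Dmap : (List B → K) →ₗ[K] (List B × List B → K) :=
  LinearMap.pi (fun p => LinearMap.proj (p.1 ++ p.2))

@[simp] lemma Dmap_apply (x : List B → K) (p : List B × List B) :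
    Dmap K B x p = x (p.1 ++ p.2) := rfl

/-- The pairing-type map `P ⊗ P → (List × List → K)`. -/
noncomputable def iota : (List B → K) ⊗[K] (List B → K) →ₗ[K] (List B × List B → K) :=
  LinearMap.pi (fun p =>
    mul2 K ∘ₗ TensorProduct.map (LinearMap.proj p.1) (LinearMap.proj p.2))

@[simp] lemma iota_tmul (x y : List B → K) (p : List B × List B) :
    iota K B (x ⊗ₜ[K] y) p = x p.1 * y p.2 := by
  simp [iota]

/-- A submodule of `List B → K` is *good* if it is closed under deconcatenation and
has finite length-`n` slices. -/
def Good (S : Submodule K (List B → K)) : Prop :=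
  (∀ x ∈ S, Dmap K B x ∈
    LinearMap.range ((iota K B) ∘ₗ TensorProduct.map S.subtype S.subtype)) ∧
  (∀ x ∈ S, ∀ n : ℕ, {l : List B | l.length = n ∧ x l ≠ 0}.Finite)

lemma range_mono {S S' : Submodule K (List B → K)} (h : S ≤ S') :
    LinearMap.range ((iota K B) ∘ₗ TensorProduct.map S.subtype S.subtype) ≤
      LinearMap.range ((iota K B) ∘ₗ TensorProduct.map S'.subtype S'.subtype) := by
  rintro - ⟨u, rfl⟩
  refine ⟨TensorProduct.map (Submodule.inclusion h) (Submodule.inclusion h) u, ?_⟩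
  have hcomp : S'.subtype ∘ₗ Submodule.inclusion h = S.subtype := by ext z; rfl
  have harg : TensorProduct.map S'.subtype S'.subtype
      (TensorProduct.map (Submodule.inclusion h) (Submodule.inclusion h) u)
        = TensorProduct.map S.subtype S.subtype u := by
    rw [← LinearMap.comp_apply, ← TensorProduct.map_comp, hcomp]
  simp only [LinearMap.comp_apply, harg]

lemma good_bot : Good K B ⊥ := by
  constructor
  · intro x hx
    rcases Submodule.mem_bot K |>.mp hx with rfl
    simp only [map_zero]
    exact Submodule.zero_mem _
  · intro x hx n
    rcases Submodule.mem_bot K |>.mp hx with rfl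
    simp

lemma good_sup {S S' : Submodule K (List B → K)} (h : Good K B S) (h' : Good K B S') :
    Good K B (S ⊔ S') := by
  constructor
  · intro x hx
    rcases Submodule.mem_sup.mp hx with ⟨a, ha, b, hb, rfl⟩
    rw [map_add]
    exact Submodule.add_mem _
      (range_mono K B le_sup_left (h.1 a ha))
      (range_mono K B le_sup_right (h'.1 b hb))
  · intro x hx n
    rcases Submodule.mem_sup.mp hx with ⟨a, ha, b, hb, rfl⟩
    refine Set.Finite.subset ((h.2 a ha n).union (h'.2 b hb n)) ?_
    intro l hl
    simp only [Set.mem_setOf_eq, Pi.add_apply] at hl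
    by_cases hA : a l = 0
    · exact Or.inr ⟨hl.1, by intro hB; exact hl.2 (by simp [hA, hB])⟩
    · exact Or.inl ⟨hl.1, hA⟩

/-- The carrier submodule of the cofree coalgebra. -/
noncomputable def Gs : Submodule K (List B → K) := sSup {S | Good K B S}

lemma good_Gs : Good K B (Gs K B) := by
  have hne : {S : Submodule K (List B → K) | Good K B S}.Nonempty := ⟨⊥, good_bot K B⟩
  have hdir : DirectedOn (· ≤ ·) {S : Submodule K (List B → K) | Good K B S} := by
    intro S hS S' hS'
    exact ⟨S ⊔ S', good_sup K B hS hS', le_sup_left, le_sup_right⟩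
  constructor
  · intro x hx
    rcases (Submodule.mem_sSup_of_directed hne hdir).mp hx with ⟨S, hS, hxS⟩
    exact range_mono K B (le_sSup hS) (hS.1 x hxS)
  · intro x hx n
    rcases (Submodule.mem_sSup_of_directed hne hdir).mp hx with ⟨S, hS, hxS⟩
    exact hS.2 x hxS n

set_option synthInstance.maxHeartbeats 1000000
set_option maxHeartbeats 1600000

/-- The underlying type of the cofree coalgebra. -/
noncomputable def Gcar : Type v := ↥(Gs K B)

noncomputable instance : AddCommGroup (Gcar K B) :=
  inferInstanceAs (AddCommGroup ↥(Gs K B))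

noncomputable instance : Module K (Gcar K B) :=
  inferInstanceAs (Module K ↥(Gs K B))

/-- Inclusion of the carrier. -/
noncomputable def jG : Gcar K B →ₗ[K] (List B → K) := (Gs K B).subtype

/-- Evaluation at a word. -/
noncomputable def ev (l : List B) : Gcar K B →ₗ[K] K :=
  LinearMap.proj l ∘ₗ jG K B

@[simp] lemma ev_apply (l : List B) (x : Gcar K B) : ev K B l x = jG K B x l := rfl

lemma ev_joint : ∀ x : Gcar K B, (∀ l, ev K B l x = 0) → x = 0 := by
  intro x hx
  have h : jG K B x = 0 := funext fun l => hx l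
  exact Subtype.ext h

/-- restriction of `iota` to the carrier. -/
noncomputable def iotaG : Gcar K B ⊗[K] Gcar K B →ₗ[K] (List B × List B → K) :=
  iota K B ∘ₗ TensorProduct.map (jG K B) (jG K B)

/-- Two-fold evaluation. -/
noncomputable def E2 (a b : List B) : Gcar K B ⊗[K] Gcar K B →ₗ[K] K :=
  mul2 K ∘ₗ TensorProduct.map (ev K B a) (ev K B b)

lemma E2_eq (a b : List B) :
    E2 K B a b = LinearMap.proj (a, b) ∘ₗ iotaG K B := by
  apply TensorProduct.ext'
  intro u v
  simp [E2, iotaG, jG, ev]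
  rfl

lemma E2_joint (t : Gcar K B ⊗[K] Gcar K B) (h : ∀ a b, E2 K B a b t = 0) : t = 0 := by
  apply joint_rTensor (M := Gcar K B) (ψ := ev K B) (ev_joint K B)
  intro a
  apply joint_lTensor (M := K) (ψ := ev K B) (ev_joint K B)
  intro b
  have h2 : TensorProduct.map (ev K B a) (ev K B b) t = 0 := by
    apply mul2_injective
    simpa [E2] using h a b
  have h3 := LinearMap.congr_fun (LinearMap.lTensor_comp_rTensor (f := ev K B a) (g := ev K B b)) t
  simp only [LinearMap.comp_apply] at h3
  rw [h3, h2]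

lemma iotaG_injective : Function.Injective (iotaG K B) := by
  intro t t' h
  rw [← sub_eq_zero]
  apply E2_joint
  intro a b
  rw [E2_eq]
  simp [map_sub, h]

lemma mem_range_iotaG (x : Gcar K B) :
    Dmap K B (jG K B x) ∈ LinearMap.range (iotaG K B) :=
  (good_Gs K B).1 (jG K B x) (show ↥(Gs K B) from x).2

/-- Comultiplication. -/
noncomputable def delta : Gcar K B →ₗ[K] Gcar K B ⊗[K] Gcar K B :=
  (LinearEquiv.ofInjective (iotaG K B) (iotaG_injective K B)).symm.toLinearMap ∘ₗ
    LinearMap.codRestrict (LinearMap.range (iotaG K B)) (Dmap K B ∘ₗ jG K B)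
      (fun x => mem_range_iotaG K B x)

lemma iotaG_delta (x : Gcar K B) : iotaG K B (delta K B x) = Dmap K B (jG K B x) := by
  have h1 := congrArg Subtype.val
    ((LinearEquiv.ofInjective (iotaG K B) (iotaG_injective K B)).apply_symm_apply
      ⟨Dmap K B (jG K B x), mem_range_iotaG K B x⟩)
  rw [LinearEquiv.ofInjective_apply] at h1
  exact h1

lemma E2_delta (x : Gcar K B) (a b : List B) :
    E2 K B a b (delta K B x) = jG K B x (a ++ b) := by
  rw [E2_eq]
  simp only [LinearMap.comp_apply, iotaG_delta]
  rfl

lemma E2_comp_delta (a b : List B) :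
    E2 K B a b ∘ₗ delta K B = ev K B (a ++ b) :=
  LinearMap.ext fun x => E2_delta K B x a b

/-- Three-fold evaluation. -/
noncomputable def E3 (a b c : List B) :
    Gcar K B ⊗[K] (Gcar K B ⊗[K] Gcar K B) →ₗ[K] K :=
  mul2 K ∘ₗ TensorProduct.map (ev K B a) (E2 K B b c)

lemma E3_joint (t : Gcar K B ⊗[K] (Gcar K B ⊗[K] Gcar K B))
    (h : ∀ a b c, E3 K B a b c t = 0) : t = 0 := by
  apply joint_rTensor (M := Gcar K B ⊗[K] Gcar K B) (ψ := ev K B) (ev_joint K B)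
  intro a
  apply joint_lTensor (M := K) (ι := List B × List B) (ψ := fun p => E2 K B p.1 p.2)
    (fun s hs => E2_joint K B s (fun a b => hs (a, b)))
  rintro ⟨b, c⟩
  have h2 : TensorProduct.map (ev K B a) (E2 K B b c) t = 0 := by
    apply mul2_injective
    simpa [E3] using h a b c
  have h3 := LinearMap.congr_fun (LinearMap.lTensor_comp_rTensor (f := ev K B a) (g := E2 K B b c)) t
  simp only [LinearMap.comp_apply] at h3
  rw [h3, h2]

lemma E3_assoc (a b c : List B) :
    E3 K B a b c ∘ₗ (TensorProduct.assoc K (Gcar K B) (Gcar K B) (Gcar K B)).toLinearMap =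
      mul2 K ∘ₗ TensorProduct.map (E2 K B a b) (ev K B c) := by
  apply TensorProduct.ext_threefold
  intro u v w
  simp [E3, E2, mul_assoc]

lemma E3_lhs (a b c : List B) (x : Gcar K B) :
    E3 K B a b c (TensorProduct.assoc K (Gcar K B) (Gcar K B) (Gcar K B)
      ((delta K B).rTensor (Gcar K B) (delta K B x))) =
        jG K B x ((a ++ b) ++ c) := by
  have h2 : (mul2 K ∘ₗ TensorProduct.map (E2 K B a b) (ev K B c)) ∘ₗ
      (delta K B).rTensor (Gcar K B) = E2 K B (a ++ b) c := by
    rw [show E2 K B (a ++ b) c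
        = mul2 K ∘ₗ TensorProduct.map (E2 K B a b ∘ₗ delta K B) (ev K B c) by
      rw [E2_comp_delta]; rfl]
    apply TensorProduct.ext'
    intro u w
    simp
  have h1 := LinearMap.congr_fun (E3_assoc K B a b c)
    ((delta K B).rTensor (Gcar K B) (delta K B x))
  have h3 := LinearMap.congr_fun h2 (delta K B x)
  simp only [LinearMap.comp_apply, LinearEquiv.coe_coe] at h1 h3
  rw [h1, h3, E2_delta]

lemma E3_rhs (a b c : List B) (x : Gcar K B) :
    E3 K B a b c ((delta K B).lTensor (Gcar K B) (delta K B x)) =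
      jG K B x (a ++ (b ++ c)) := by
  have h2 : E3 K B a b c ∘ₗ (delta K B).lTensor (Gcar K B) =
      mul2 K ∘ₗ TensorProduct.map (ev K B a) (E2 K B b c ∘ₗ delta K B) := by
    apply TensorProduct.ext'
    intro u w
    simp [E3]
  have h3 := LinearMap.congr_fun h2 (delta K B x)
  simp only [LinearMap.comp_apply] at h3
  rw [h3, E2_comp_delta]
  exact E2_delta K B x a (b ++ c)

noncomputable instance instCoalgebraGcar : Coalgebra K (Gcar K B) where
  comul := delta K B
  counit := ev K B []
  coassoc := by
    apply LinearMap.ext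
    intro x
    simp only [LinearMap.comp_apply, LinearEquiv.coe_coe]
    rw [← sub_eq_zero]
    apply E3_joint
    intro a b c
    rw [map_sub, E3_lhs, E3_rhs, List.append_assoc, sub_self]
  rTensor_counit_comp_comul := by
    apply LinearMap.ext
    intro x
    simp only [LinearMap.comp_apply, TensorProduct.mk_apply]
    rw [← sub_eq_zero]
    apply joint_lTensor (M := K) (ψ := ev K B) (ev_joint K B)
    intro l
    rw [map_sub, sub_eq_zero]
    apply mul2_injective
    have h1 := LinearMap.congr_fun
      (LinearMap.lTensor_comp_rTensor (f := ev K B []) (g := ev K B l)) (delta K B x)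
    simp only [LinearMap.comp_apply] at h1
    rw [h1]
    have h2 : mul2 K (TensorProduct.map (ev K B []) (ev K B l) (delta K B x)) =
        E2 K B [] l (delta K B x) := rfl
    rw [h2, E2_delta]
    simp
  lTensor_counit_comp_comul := by
    apply LinearMap.ext
    intro x
    simp only [LinearMap.comp_apply, LinearMap.flip_apply, TensorProduct.mk_apply]
    rw [← sub_eq_zero]
    apply joint_rTensor (M := K) (ψ := ev K B) (ev_joint K B)
    intro l
    rw [map_sub, sub_eq_zero]
    apply mul2_injective
    have h1 := LinearMap.congr_fun
      (LinearMap.rTensor_comp_lTensor (f := ev K B l) (g := ev K B [])) (delta K B x)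
    simp only [LinearMap.comp_apply] at h1
    rw [h1]
    have h2 : mul2 K (TensorProduct.map (ev K B l) (ev K B []) (delta K B x)) =
        E2 K B l [] (delta K B x) := rfl
    rw [h2, E2_delta]
    simp

variable {C : Type*} [AddCommGroup C] [Module K C] [Coalgebra K C]

/-- Coefficient functional. -/
noncomputable def fb (f0 : C →ₗ[K] (B →₀ K)) (b : B) : C →ₗ[K] K :=
  Finsupp.lapply b ∘ₗ f0

/-- The word functionals attached to a linear map `f0 : C → B →₀ K`. -/
noncomputable def gword (f0 : C →ₗ[K] (B →₀ K)) : List B → (C →ₗ[K] K)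
  | [] => Coalgebra.counit
  | b :: l => mul2 K ∘ₗ TensorProduct.map (fb K B f0 b) (gword f0 l) ∘ₗ Coalgebra.comul

lemma gword_expand (f0 : C →ₗ[K] (B →₀ K)) (b : B) (l : List B) (c : C)
    {ι : Type*} (r : Coalgebra.Repr K c ι) :
    gword K B f0 (b :: l) c =
      ∑ i ∈ r.index, fb K B f0 b (r.left i) * gword K B f0 l (r.right i) := by
  show mul2 K (TensorProduct.map (fb K B f0 b) (gword K B f0 l) (Coalgebra.comul c)) = _
  rw [← r.eq]
  rw [map_sum, map_sum]
  refine Finset.sum_congr rfl fun i _ => ?_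
  simp

lemma slice_finite (f0 : C →ₗ[K] (B →₀ K)) (n : ℕ) (c : C) :
    {l : List B | l.length = n ∧ gword K B f0 l c ≠ 0}.Finite := by
  classical
  induction n generalizing c with
  | zero =>
    refine Set.Finite.subset (Set.finite_singleton ([] : List B)) ?_
    rintro l ⟨hl, -⟩
    simp [List.length_eq_zero_iff.mp hl]
  | succ n ih =>
    set r := Coalgebra.Repr.arbitrary K c
    refine Set.Finite.subset
      (Set.Finite.biUnion (r.index : Finset _).finite_toSet
        (fun i _ => (((f0 (r.left i)).support.finite_toSet.prod
          (ih (r.right i))).image (fun p : B × List B => p.1 :: p.2)))) ?_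
    rintro l ⟨hlen, hne⟩
    cases l with
    | nil => simp at hlen
    | cons b l' =>
      rw [gword_expand K B f0 b l' c r] at hne
      have hex : ∃ i ∈ r.index, fb K B f0 b (r.left i) * gword K B f0 l' (r.right i) ≠ 0 := by
        by_contra hcon
        push_neg at hcon
        exact hne (Finset.sum_eq_zero hcon)
      obtain ⟨i, hi, hterm⟩ := hex
      have hb : fb K B f0 b (r.left i) ≠ 0 := left_ne_zero_of_mul hterm
      have hl' : gword K B f0 l' (r.right i) ≠ 0 := right_ne_zero_of_mul hterm
      refine Set.mem_biUnion hi ?_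
      refine ⟨(b, l'), ?_, rfl⟩
      constructor
      · simpa [fb, Finsupp.mem_support_iff] using hb
      · exact ⟨by simpa using hlen, hl'⟩

lemma gword_append (f0 : C →ₗ[K] (B →₀ K)) (l₁ l₂ : List B) :
    gword K B f0 (l₁ ++ l₂) = mul2 K ∘ₗ
      TensorProduct.map (gword K B f0 l₁) (gword K B f0 l₂) ∘ₗ
        (Coalgebra.comul (R := K) (A := C)) := by
  induction l₁ generalizing l₂ with
  | nil =>
    apply LinearMap.ext
    intro c
    simp only [List.nil_append, LinearMap.comp_apply]
    rw [show gword K B f0 ([] : List B) = (Coalgebra.counit : C →ₗ[K] K) from rfl]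
    have h1 := LinearMap.congr_fun
      (LinearMap.lTensor_comp_rTensor (f := (Coalgebra.counit : C →ₗ[K] K))
        (g := gword K B f0 l₂)) (Coalgebra.comul (R := K) c)
    simp only [LinearMap.comp_apply] at h1
    rw [← h1, Coalgebra.rTensor_counit_comul]
    show gword K B f0 l₂ c = mul2 K ((gword K B f0 l₂).lTensor K (1 ⊗ₜ[K] c))
    simp
  | cons b l₁ ih =>
    have step1 : TensorProduct.map (fb K B f0 b) (gword K B f0 (l₁ ++ l₂)) =
        TensorProduct.map (fb K B f0 b)
            (mul2 K ∘ₗ TensorProduct.map (gword K B f0 l₁) (gword K B f0 l₂)) ∘ₗ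
          (Coalgebra.comul (R := K) (A := C)).lTensor C := by
      apply TensorProduct.ext'
      intro x y
      simp [ih]
    have step2 : (mul2 K ∘ₗ TensorProduct.map (fb K B f0 b)
          (mul2 K ∘ₗ TensorProduct.map (gword K B f0 l₁) (gword K B f0 l₂))) ∘ₗ
          (TensorProduct.assoc K C C C).toLinearMap =
        mul2 K ∘ₗ TensorProduct.map
          (mul2 K ∘ₗ TensorProduct.map (fb K B f0 b) (gword K B f0 l₁))
          (gword K B f0 l₂) := by
      apply TensorProduct.ext_threefold
      intro x y z
      simp [mul_assoc]
    have step3 : (mul2 K ∘ₗ TensorProduct.map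
          (mul2 K ∘ₗ TensorProduct.map (fb K B f0 b) (gword K B f0 l₁))
          (gword K B f0 l₂)) ∘ₗ (Coalgebra.comul (R := K) (A := C)).rTensor C =
        mul2 K ∘ₗ TensorProduct.map (gword K B f0 (b :: l₁)) (gword K B f0 l₂) := by
      apply TensorProduct.ext'
      intro x y
      simp [gword]
    apply LinearMap.ext
    intro c
    show mul2 K (TensorProduct.map (fb K B f0 b) (gword K B f0 (l₁ ++ l₂))
      (Coalgebra.comul (R := K) c)) = _
    rw [step1]
    simp only [LinearMap.comp_apply]
    rw [← Coalgebra.coassoc_apply]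
    have h2 := LinearMap.congr_fun step2
      ((Coalgebra.comul (R := K) (A := C)).rTensor C (Coalgebra.comul (R := K) c))
    simp only [LinearMap.comp_apply, LinearEquiv.coe_coe] at h2
    rw [h2]
    have h3 := LinearMap.congr_fun step3 (Coalgebra.comul (R := K) c)
    simp only [LinearMap.comp_apply] at h3
    rw [h3]

/-- The canonical map to functions on words. -/
noncomputable def rep (f0 : C →ₗ[K] (B →₀ K)) : C →ₗ[K] (List B → K) :=
  LinearMap.pi (fun l => gword K B f0 l)

lemma D_comp_rep (f0 : C →ₗ[K] (B →₀ K)) :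
    Dmap K B ∘ₗ rep K B f0 = iota K B ∘ₗ
      TensorProduct.map (rep K B f0) (rep K B f0) ∘ₗ (Coalgebra.comul (R := K) (A := C)) := by
  apply LinearMap.ext
  intro c
  funext p
  have h := LinearMap.congr_fun (gword_append K B f0 p.1 p.2) c
  simp only [LinearMap.comp_apply] at h
  show gword K B f0 (p.1 ++ p.2) c = _
  rw [h]
  show mul2 K (TensorProduct.map (gword K B f0 p.1) (gword K B f0 p.2)
    (Coalgebra.comul (R := K) c)) =
    mul2 K (TensorProduct.map (LinearMap.proj p.1) (LinearMap.proj p.2)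
      (TensorProduct.map (rep K B f0) (rep K B f0) (Coalgebra.comul (R := K) c)))
  congr 1
  rw [← LinearMap.comp_apply (TensorProduct.map (LinearMap.proj p.1) (LinearMap.proj p.2)),
    ← TensorProduct.map_comp]
  rfl

lemma good_rep (f0 : C →ₗ[K] (B →₀ K)) : Good K B (LinearMap.range (rep K B f0)) := by
  constructor
  · rintro - ⟨c, rfl⟩
    refine ⟨TensorProduct.map ((rep K B f0).rangeRestrict) ((rep K B f0).rangeRestrict)
      (Coalgebra.comul (R := K) c), ?_⟩
    have hsub : (LinearMap.range (rep K B f0)).subtype ∘ₗ (rep K B f0).rangeRestrict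
        = rep K B f0 := by
      ext z
      rfl
    simp only [LinearMap.comp_apply]
    rw [← LinearMap.comp_apply (TensorProduct.map _ _), ← TensorProduct.map_comp, hsub]
    have h := LinearMap.congr_fun (D_comp_rep K B f0) c
    simp only [LinearMap.comp_apply] at h
    exact h.symm
  · rintro - ⟨c, rfl⟩ n
    exact slice_finite K B f0 n c

lemma range_rep_le (f0 : C →ₗ[K] (B →₀ K)) : LinearMap.range (rep K B f0) ≤ Gs K B :=
  le_sSup (good_rep K B f0)

/-- The universal map into the cofree coalgebra. -/
noncomputable def Gmap (f0 : C →ₗ[K] (B →₀ K)) : C →ₗ[K] Gcar K B :=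
  LinearMap.codRestrict (Gs K B) (rep K B f0)
    (fun c => range_rep_le K B f0 (LinearMap.mem_range_self _ c))

lemma jG_Gmap (f0 : C →ₗ[K] (B →₀ K)) (c : C) : jG K B (Gmap K B f0 c) = rep K B f0 c := rfl

lemma counit_Gmap (f0 : C →ₗ[K] (B →₀ K)) (c : C) :
    ev K B [] (Gmap K B f0 c) = Coalgebra.counit (R := K) c := rfl

lemma comul_Gmap (f0 : C →ₗ[K] (B →₀ K)) (c : C) :
    delta K B (Gmap K B f0 c) =
      TensorProduct.map (Gmap K B f0) (Gmap K B f0) (Coalgebra.comul (R := K) c) := by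
  apply iotaG_injective
  rw [iotaG_delta]
  have h1 : iotaG K B (TensorProduct.map (Gmap K B f0) (Gmap K B f0)
      (Coalgebra.comul (R := K) c)) =
      iota K B (TensorProduct.map (rep K B f0) (rep K B f0)
        (Coalgebra.comul (R := K) c)) := by
    rw [iotaG, LinearMap.comp_apply, ← LinearMap.comp_apply (TensorProduct.map _ _),
      ← TensorProduct.map_comp]
    rfl
  rw [h1, jG_Gmap]
  have h := LinearMap.congr_fun (D_comp_rep K B f0) c
  simp only [LinearMap.comp_apply] at h
  exact h

/-- The universal map as a coalgebra morphism. -/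
noncomputable def GHom (f0 : C →ₗ[K] (B →₀ K)) : C →ₗc[K] Gcar K B :=
  { Gmap K B f0 with
    counit_comp := LinearMap.ext fun c => counit_Gmap K B f0 c
    map_comp_comul := LinearMap.ext fun c => by
      simp only [LinearMap.comp_apply]
      exact (comul_Gmap K B f0 c).symm }

lemma GHom_toLinearMap (f0 : C →ₗ[K] (B →₀ K)) :
    (GHom K B f0).toLinearMap = Gmap K B f0 := rfl

/-- single-letter word values -/
lemma gword_single (f0 : C →ₗ[K] (B →₀ K)) (b : B) :
    gword K B f0 [b] = fb K B f0 b := by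
  apply LinearMap.ext
  intro c
  show mul2 K (TensorProduct.map (fb K B f0 b) (Coalgebra.counit) (Coalgebra.comul (R := K) c))
    = fb K B f0 b c
  have h1 := LinearMap.congr_fun
    (LinearMap.rTensor_comp_lTensor (f := fb K B f0 b)
      (g := (Coalgebra.counit : C →ₗ[K] K))) (Coalgebra.comul (R := K) c)
  simp only [LinearMap.comp_apply] at h1
  rw [← h1, Coalgebra.lTensor_counit_comul]
  show mul2 K ((fb K B f0 b).rTensor K (c ⊗ₜ[K] 1)) = _
  simp

lemma slice_one_finite (x : Gcar K B) : {b : B | jG K B x [b] ≠ 0}.Finite := by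
  classical
  have h := (good_Gs K B).2 (jG K B x) (show ↥(Gs K B) from x).2 1
  have hsub : {b : B | jG K B x [b] ≠ 0} ⊆
      (fun b : B => [b]) ⁻¹' {l : List B | l.length = 1 ∧ jG K B x l ≠ 0} := by
    intro b hb
    exact ⟨rfl, hb⟩
  refine Set.Finite.subset (Set.Finite.preimage ?_ h) hsub
  intro b _ b' _ hbb
  simpa using hbb

/-- Projection to "degree one" coefficients. -/
noncomputable def piG : Gcar K B →ₗ[K] (B →₀ K) where
  toFun x := Finsupp.onFinset (slice_one_finite K B x).toFinset (fun b => jG K B x [b])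
    (fun b hb => (slice_one_finite K B x).mem_toFinset.mpr hb)
  map_add' x y := by
    ext b
    simp [Finsupp.onFinset_apply]
  map_smul' r x := by
    ext b
    simp [Finsupp.onFinset_apply]

@[simp] lemma piG_apply (x : Gcar K B) (b : B) : piG K B x b = jG K B x [b] := rfl

variable {C : Type*} [AddCommGroup C] [Module K C] [Coalgebra K C]

lemma piG_Gmap (f0 : C →ₗ[K] (B →₀ K)) (c : C) : piG K B (Gmap K B f0 c) = f0 c := by
  ext b
  rw [piG_apply, jG_Gmap]
  show gword K B f0 [b] c = f0 c b
  rw [gword_single]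
  rfl

lemma unique_aux (f0 : C →ₗ[K] (B →₀ K)) (h : C →ₗc[K] Gcar K B)
    (hπ : ∀ c, piG K B (h c) = f0 c) :
    ∀ (l : List B) (c : C), jG K B (h c) l = gword K B f0 l c := by
  intro l
  induction l with
  | nil =>
    intro c
    exact CoalgHomClass.counit_comp_apply (R := K) (A := C) (B := Gcar K B) h c
  | cons b l ih =>
    intro c
    have hcom : delta K B (h c) =
        TensorProduct.map h.toLinearMap h.toLinearMap (Coalgebra.comul (R := K) c) :=
      (CoalgHomClass.map_comp_comul_apply (R := K) h c).symm
    have hiota : (LinearMap.proj (([b], l) : List B × List B)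
          (R := K) (φ := fun _ : List B × List B => K)) ∘ₗ iotaG K B ∘ₗ
          TensorProduct.map h.toLinearMap h.toLinearMap =
        mul2 K ∘ₗ TensorProduct.map (ev K B [b] ∘ₗ h.toLinearMap)
          (ev K B l ∘ₗ h.toLinearMap) := by
      apply TensorProduct.ext'
      intro u v
      simp [iotaG, ev]
    have hb : ev K B [b] ∘ₗ h.toLinearMap = fb K B f0 b := by
      apply LinearMap.ext
      intro c'
      have h1 : ev K B [b] (h c') = piG K B (h c') b := rfl
      rw [LinearMap.comp_apply]
      show ev K B [b] (h c') = fb K B f0 b c'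
      rw [h1, hπ c']
      rfl
    have hl : ev K B l ∘ₗ h.toLinearMap = gword K B f0 l := by
      apply LinearMap.ext
      intro c'
      exact ih c'
    have key : jG K B (h c) (b :: l) = iotaG K B (delta K B (h c)) (([b], l)) := by
      rw [iotaG_delta]
      rfl
    rw [key, hcom]
    have h2 := LinearMap.congr_fun hiota (Coalgebra.comul (R := K) c)
    simp only [LinearMap.comp_apply] at h2
    have h2' : iotaG K B (TensorProduct.map h.toLinearMap h.toLinearMap
        (Coalgebra.comul (R := K) c)) (([b], l)) =
        mul2 K ((TensorProduct.map (ev K B [b] ∘ₗ h.toLinearMap)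
          (ev K B l ∘ₗ h.toLinearMap)) (Coalgebra.comul (R := K) c)) := h2
    rw [h2', hb, hl]
    rfl

end CofreeAux

set_option maxHeartbeats 1600000 in
/-- Cofree coalgebras exist over a field: for every `K`-vector space `V` there exist a
coassociative counital `K`-coalgebra `Γ` and a `K`-linear map `π : Γ → V` such that for every
coassociative counital `K`-coalgebra `C` and every `K`-linear map `f : C → V` there is a unique
coalgebra morphism `g : C → Γ` with `π ∘ g = f`. -/
theorem cofree_coalgebra_exists (K : Type) [Field K]
    (V : Type) [AddCommGroup V] [Module K V] :
    ∃ (Γ : CoalgCat K) (π : Γ →ₗ[K] V),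
      ∀ (C : Type) [AddCommGroup C] [Module K C] [Coalgebra K C] (f : C →ₗ[K] V),
        ∃! g : C →ₗc[K] Γ, π ∘ₗ g.toLinearMap = f := by
  classical
  set B0 := ↥(Module.Basis.ofVectorSpaceIndex K V) with hB0
  let bV : Module.Basis B0 K V := Module.Basis.ofVectorSpace K V
  let B := ULift.{u_1} B0
  let e : (B0 →₀ K) ≃ₗ[K] (B →₀ K) :=
    Finsupp.domLCongr (Equiv.ulift.symm : B0 ≃ B)
  refine ⟨CoalgCat.of K (CofreeAux.Gcar K B),
    bV.repr.symm.toLinearMap ∘ₗ e.symm.toLinearMap ∘ₗ CofreeAux.piG K B, ?_⟩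
  intro C _ _ _ f
  let f0 : C →ₗ[K] (B →₀ K) := e.toLinearMap ∘ₗ bV.repr.toLinearMap ∘ₗ f
  refine ⟨CofreeAux.GHom K B f0, ?_, ?_⟩
  · apply LinearMap.ext
    intro c
    simp only [LinearMap.comp_apply]
    show bV.repr.symm (e.symm (CofreeAux.piG K B (CofreeAux.Gmap K B f0 c))) = f c
    rw [CofreeAux.piG_Gmap]
    show bV.repr.symm (e.symm (e (bV.repr (f c)))) = f c
    simp
  · intro h hh
    have hπ : ∀ c, CofreeAux.piG K B (h c) = f0 c := by
      intro c
      have h1 := LinearMap.congr_fun hh c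
      simp only [LinearMap.comp_apply] at h1
      have h2 := congrArg (fun v => e (bV.repr v)) h1
      show CofreeAux.piG K B (h c) = e (bV.repr (f c))
      simpa using h2
    have hval : ∀ c : C, h c = CofreeAux.Gmap K B f0 c := by
      intro c
      apply Subtype.ext
      funext l
      exact CofreeAux.unique_aux K B f0 h hπ l c
    exact DFunLike.ext _ _ hval
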